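/- Suppose a network of agents runs W-MSR with parameter F and the set of agents behaving as leaders satisfies |L| ≤ F. Then consensus tracking to an arbitrary reference can fail: concretely, if at time t₁ all normal agents and all adversarial agents have the common state a, the reference value is a₁ ≠ a, leaders hold value a₁, and each normal agent has at most F in-neighbors with value ≠ a (namely only leaders), then every normal agent filters out all leader values and x_i(t) = a for all normal i and all t ≥ t₁. -/

import Mathlib

/-- Lemma 1 (necessity of F+1 leaders): with at most F leaders, if at time t₁
all normal and adversarial agents hold a common value a, adversaries keep
value a, leaders hold a₁ ≠ a, and each normal agent has at most F in-neighbors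
that are leaders (its only in-neighbors with value ≠ a), then under W-MSR every
normal agent filters out all leader values and stays at a forever. -/
theorem wmsr_few_leaders_no_tracking {V : Type*} [Fintype V] [DecidableEq V]
    (F : ℕ) (Nrm Ldr Adv : Finset V) (inb : V → Finset V)
    (x : ℕ → V → ℝ) (a a₁ : ℝ) (t₁ : ℕ)
    (hne : a₁ ≠ a)
    (hLcard : Ldr.card ≤ F)
    (hpart : ∀ i : V, i ∈ Nrm ∨ i ∈ Ldr ∨ i ∈ Adv)
    (hLnbr : ∀ i ∈ Nrm, ((inb i) ∩ Ldr).card ≤ F)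
    (hinit : ∀ i ∈ Nrm, x t₁ i = a)
    (hadv : ∀ i ∈ Adv, ∀ t, t₁ ≤ t → x t i = a)
    (hldr : ∀ i ∈ Ldr, ∀ t, t₁ ≤ t → x t i = a₁)
    (hupdate : ∀ i ∈ Nrm, ∀ t, t₁ ≤ t →
      ∃ (R : Finset V) (w : V → ℝ),
        R ⊆ insert i (inb i) ∧ i ∈ R ∧
        (((inb i).filter (fun j => x t i < x t j)).card ≤ F →
          ∀ j ∈ R, ¬ (x t i < x t j)) ∧
        (((inb i).filter (fun j => x t j < x t i)).card ≤ F →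
          ∀ j ∈ R, ¬ (x t j < x t i)) ∧
        (∀ j ∈ R, 0 ≤ w j) ∧ (∑ j ∈ R, w j = 1) ∧
        x (t + 1) i = ∑ j ∈ R, w j * x t j) :
    ∀ i ∈ Nrm, ∀ t, t₁ ≤ t → x t i = a := by
  suffices h : ∀ t, t₁ ≤ t → ∀ i ∈ Nrm, x t i = a by
    intro i hi t ht; exact h t ht i hi
  intro t ht
  induction t, ht using Nat.le_induction with
  | base => exact hinit
  | succ t ht ih =>
    intro i hi
    obtain ⟨R, w, hRsub, hiR, hhi, hlo, hw0, hw1, hx⟩ := hupdate i hi t ht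
    have hxi : x t i = a := ih i hi
    have hval : ∀ j : V, x t j = a ∨ j ∈ Ldr := by
      intro j
      rcases hpart j with h | h | h
      · exact Or.inl (ih j h)
      · exact Or.inr h
      · exact Or.inl (hadv j h t ht)
    have hsub : ∀ (p : V → Prop) [DecidablePred p], (∀ j, p j → x t j ≠ a) →
        ((inb i).filter p).card ≤ F := by
      intro p _ hp
      refine le_trans (Finset.card_le_card ?_) (hLnbr i hi)
      intro j hj
      rw [Finset.mem_filter] at hj
      rcases hval j with h | h
      · exact absurd h (hp j hj.2)
      · exact Finset.mem_inter.mpr ⟨hj.1, h⟩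
    have h1 := hhi (hsub _ (fun j hj => by rw [hxi] at hj; exact ne_of_gt hj))
    have h2 := hlo (hsub _ (fun j hj => by rw [hxi] at hj; exact ne_of_lt hj))
    have hR : ∀ j ∈ R, x t j = a := by
      intro j hj
      have := le_antisymm (not_lt.mp (h1 j hj)) (not_lt.mp (h2 j hj))
      rw [← hxi]; exact this
    rw [hx, Finset.sum_congr rfl (fun j hj => by rw [hR j hj]), ← Finset.sum_mul,
      hw1, one_mul]
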